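/- Let S : ℝⁿ ⇉ ℝᵐ, X ⊆ ℝⁿ closed and convex, (x̄, ū) ∈ graph S with x̄ ∈ X, and suppose graph S is locally closed at (x̄, ū). Then S has the Lipschitz-like property relative to X at x̄ for ū if and only if there exists κ ≥ 0 such that for all (x, u) ∈ graph(S|_X) close enough to (x̄, ū), every (x*, -u*) in the limiting normal cone to graph(S|_X) at (x, u) satisfies ‖proj_{T_X(x)}(x*)‖ ≤ κ‖u*‖. -/

import Mathlib

open Filter Metric Set
open scoped Topology RealInnerProductSpace

noncomputable section

abbrev Eu (n : ℕ) := EuclideanSpace ℝ (Fin n)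

section GeneralDefs

variable {E F : Type*} [NormedAddCommGroup E] [NormedSpace ℝ E]
  [NormedAddCommGroup F] [NormedSpace ℝ F]

/-- `v` is a proximal normal vector to `A` at `a`: for some `t > 0`,
`a` is a nearest point of `A` to `a + t • v`. -/
def proxNormal (A : Set E) (a : E) : Set E :=
  {v | ∃ t : ℝ, 0 < t ∧ ‖t • v‖ = Metric.infDist (a + t • v) A}

/-- the set of nearest points of `K` to `x` (metric projection). -/
def projSet (K : Set E) (x : E) : Set E :=
  {y | y ∈ K ∧ ∀ z ∈ K, ‖x - y‖ ≤ ‖x - z‖}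

/-- the contingent (tangent) cone to `X` at `x`. -/
def tangCone (X : Set E) (x : E) : Set E :=
  {w | ∃ (t : ℕ → ℝ) (v : ℕ → E), (∀ k, 0 < t k) ∧ Tendsto t atTop (𝓝 0) ∧
    Tendsto v atTop (𝓝 w) ∧ ∀ k, x + t k • v k ∈ X}

/-- `A` is locally closed at `a`. -/
def LocallyClosedAt (A : Set E) (a : E) : Prop := ∃ U ∈ 𝓝 a, IsClosed (A ∩ U)

/-- the graph of the restriction `S|_X`. -/
def svGraph (S : E → Set F) (X : Set E) : Set (E × F) := {p | p.1 ∈ X ∧ p.2 ∈ S p.1}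

/-- the Lipschitz-like property of `S` relative to `X` at `x₀` for `u₀` with constant `κ`. -/
def LipschitzLikeRel (S : E → Set F) (X : Set E) (x₀ : E) (u₀ : F) (κ : ℝ) : Prop :=
  LocallyClosedAt (svGraph S univ) (x₀, u₀) ∧
  ∃ V ∈ 𝓝 x₀, ∃ W ∈ 𝓝 u₀, ∀ x ∈ X ∩ V, ∀ x' ∈ X ∩ V, ∀ u ∈ S x' ∩ W,
    ∃ u'' ∈ S x, ‖u - u''‖ ≤ κ * ‖x' - x‖

/-- the graphical modulus of `S` relative to `X` at `x₀` for `u₀` (as an extended real,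
the infimum of all Lipschitz-like constants). -/
def gmod (S : E → Set F) (X : Set E) (x₀ : E) (u₀ : F) : EReal :=
  sInf {c : EReal | ∃ κ : ℝ, 0 ≤ κ ∧ c = (κ : EReal) ∧
    ∃ V ∈ 𝓝 x₀, ∃ W ∈ 𝓝 u₀, ∀ x ∈ X ∩ V, ∀ x' ∈ X ∩ V, ∀ u ∈ S x' ∩ W,
      ∃ u'' ∈ S x, ‖u - u''‖ ≤ κ * ‖x' - x‖}

/-- the horizon cone of `A`. -/
def horizonCone (A : Set E) : Set E :=
  {w | ∃ (a : ℕ → E) (l : ℕ → ℝ), (∀ k, a k ∈ A) ∧ (∀ k, 0 < l k) ∧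
    Tendsto l atTop (𝓝 0) ∧ Tendsto (fun k => l k • a k) atTop (𝓝 w)}

/-- extended-real absolute difference `|a - b|`. -/
def eabsdiff (a b : EReal) : EReal := max (a - b) (b - a)

/-- `f` is locally Lipschitz continuous at `x₀` relative to `X`. -/
def RelLipschitzAt (f : E → EReal) (X : Set E) (x₀ : E) : Prop :=
  ∃ κ : ℝ, 0 ≤ κ ∧ ∃ V ∈ 𝓝 x₀, ∀ x ∈ X ∩ V, ∀ y ∈ X ∩ V,
    eabsdiff (f x) (f y) ≤ ((κ * ‖x - y‖ : ℝ) : EReal)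

/-- the Lipschitz modulus of `f` at `x₀` relative to `X` (as an extended real). -/
def relLipMod (f : E → EReal) (X : Set E) (x₀ : E) : EReal :=
  sInf {c : EReal | ∃ κ : ℝ, 0 ≤ κ ∧ c = (κ : EReal) ∧ ∃ V ∈ 𝓝 x₀,
    ∀ x ∈ X ∩ V, ∀ y ∈ X ∩ V, eabsdiff (f x) (f y) ≤ ((κ * ‖x - y‖ : ℝ) : EReal)}

end GeneralDefs

section InnerDefs

variable {E F : Type*} [NormedAddCommGroup E] [InnerProductSpace ℝ E]
  [NormedAddCommGroup F] [InnerProductSpace ℝ F]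

/-- the regular (Fréchet) normal cone to `A ⊆ E × F` at `a`. -/
def regNormalP (A : Set (E × F)) (a : E × F) : Set (E × F) :=
  {v | ∀ ε : ℝ, 0 < ε → ∃ δ > 0, ∀ b ∈ A, ‖b - a‖ ≤ δ →
    ⟪v.1, b.1 - a.1⟫ + ⟪v.2, b.2 - a.2⟫ ≤ ε * ‖b - a‖}

/-- the limiting (Mordukhovich) normal cone to `A ⊆ E × F` at `a`. -/
def limNormalP (A : Set (E × F)) (a : E × F) : Set (E × F) :=
  {v | ∃ (b : ℕ → E × F) (w : ℕ → E × F), (∀ k, b k ∈ A) ∧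
    (∀ k, w k ∈ regNormalP A (b k)) ∧ Tendsto b atTop (𝓝 a) ∧ Tendsto w atTop (𝓝 v)}

/-- the limiting coderivative of `S` at `x` for `u`:
`xs ∈ coderiv S x u us ↔ (xs, -us) ∈ N_{graph S}(x, u)`. -/
def coderiv (S : E → Set F) (x : E) (u : F) (us : F) : Set E :=
  {xs | (xs, -us) ∈ limNormalP (svGraph S univ) (x, u)}

/-- the projectional coderivative of `S` at `x₀` for `u₀` with respect to `X`. -/
def projCoderiv (S : E → Set F) (X : Set E) (x₀ : E) (u₀ : F) (us : F) : Set E :=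
  {xs | ∃ (x : ℕ → E) (u : ℕ → F) (xv : ℕ → E) (uv : ℕ → F) (y : ℕ → E),
    (∀ k, (x k, u k) ∈ svGraph S X) ∧
    (∀ k, (xv k, -(uv k)) ∈ limNormalP (svGraph S X) (x k, u k)) ∧
    (∀ k, y k ∈ projSet (tangCone X (x k)) (xv k)) ∧
    Tendsto x atTop (𝓝 x₀) ∧ Tendsto u atTop (𝓝 u₀) ∧
    Tendsto uv atTop (𝓝 us) ∧ Tendsto y atTop (𝓝 xs)}

/-- the regular (Fréchet) subdifferential of an extended-real-valued function. -/
def regSubdiff (g : E → EReal) (x : E) : Set E :=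
  {v | ∀ ε : ℝ, 0 < ε → ∃ δ > 0, ∀ y, ‖y - x‖ ≤ δ →
    g x + ((⟪v, y - x⟫ - ε * ‖y - x‖ : ℝ) : EReal) ≤ g y}

/-- the limiting (Mordukhovich) subdifferential. -/
def limSubdiff (g : E → EReal) (x : E) : Set E :=
  {v | ∃ (xk vk : ℕ → E), Tendsto xk atTop (𝓝 x) ∧
    Tendsto (fun k => g (xk k)) atTop (𝓝 (g x)) ∧
    (∀ k, vk k ∈ regSubdiff g (xk k)) ∧ Tendsto vk atTop (𝓝 v)}

/-- the horizon (singular) subdifferential. -/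
def horizonSubdiff (g : E → EReal) (x : E) : Set E :=
  {v | ∃ (xk vk : ℕ → E) (lk : ℕ → ℝ), Tendsto xk atTop (𝓝 x) ∧
    Tendsto (fun k => g (xk k)) atTop (𝓝 (g x)) ∧ (∀ k, 0 < lk k) ∧
    Tendsto lk atTop (𝓝 0) ∧ (∀ k, vk k ∈ regSubdiff g (xk k)) ∧
    Tendsto (fun k => lk k • vk k) atTop (𝓝 v)}

/-- the outer limiting subdifferential of `g` at `xb` with respect to `vb`. -/
def outerSubdiffWrt (g : E → EReal) (xb vb : E) : Set E :=
  {v | ∃ (xk vk : ℕ → E), Tendsto xk atTop (𝓝 xb) ∧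
    Tendsto (fun k => g (xk k)) atTop (𝓝 (g xb)) ∧
    (∀ k, g xb + ((⟪vb, xk k - xb⟫ : ℝ) : EReal) < g (xk k)) ∧
    (∀ k, vk k ∈ limSubdiff g (xk k)) ∧ Tendsto vk atTop (𝓝 v)}

/-- `D` is a convex polyhedron (finite intersection of closed half-spaces). -/
def IsPolyhedral (D : Set E) : Prop :=
  ∃ s : Finset (E × ℝ), D = {v | ∀ p ∈ s, ⟪p.1, v⟫ ≤ p.2}

/-- the support function of `D`. -/
def supportFn (D : Set E) : E → EReal :=
  fun x => sSup ((fun v => ((⟪v, x⟫ : ℝ) : EReal)) '' D)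

end InnerDefs

lemma sub_mem_tangCone {n : ℕ} {X : Set (Eu n)} (hXconv : Convex ℝ X) {x z : Eu n}
    (hx : x ∈ X) (hz : z ∈ X) : z - x ∈ tangCone X x := by
  refine ⟨fun k => 1 / (k + 1), fun _ => z - x, fun k => by positivity,
    tendsto_one_div_add_atTop_nhds_zero_nat, tendsto_const_nhds, fun k => ?_⟩
  have h1 : (0:ℝ) ≤ 1/(k+1) := by positivity
  have h2 : (1:ℝ)/(k+1) ≤ 1 := by
    rw [div_le_one (by positivity)]
    linarith [Nat.cast_nonneg (α := ℝ) k]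
  have := hXconv hx hz (a := 1 - 1/(k+1)) (b := 1/(k+1)) (by linarith) h1 (by ring)
  convert this using 1
  rw [smul_sub, sub_smul, one_smul]
  abel

lemma smul_mem_tangCone {n : ℕ} {X : Set (Eu n)} {x w : Eu n} {c : ℝ} (hc : 0 < c)
    (hw : w ∈ tangCone X x) : c • w ∈ tangCone X x := by
  obtain ⟨t, v, ht, ht0, hv, hm⟩ := hw
  refine ⟨fun k => t k / c, fun k => c • v k, fun k => div_pos (ht k) hc, ?_, ?_, fun k => ?_⟩
  · have := ht0.div_const c
    simpa using this
  · exact hv.const_smul c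
  · have : (t k / c) • (c • v k) = t k • v k := by
      rw [smul_smul, div_mul_cancel₀ _ (ne_of_gt hc)]
    rw [this]
    exact hm k

lemma inner_eq_sq_of_projSet {n : ℕ} {T : Set (Eu n)} {xs y : Eu n}
    (hy : y ∈ projSet T xs) (hT : ∀ c : ℝ, 0 < c → c • y ∈ T) :
    ⟪xs, y⟫ = ‖y‖ ^ 2 := by
  obtain ⟨hyT, hmin⟩ := hy
  have key : ∀ ε : ℝ, -1 < ε → 0 ≤ ε * (ε * ‖y‖^2 - 2 * ⟪xs - y, y⟫) := by
    intro ε hε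
    have h1 : (1+ε) • y ∈ T := hT _ (by linarith)
    have h2 := hmin _ h1
    have e : xs - (1+ε) • y = (xs - y) + (-ε) • y := by
      rw [add_smul, one_smul, neg_smul]
      abel
    rw [e, ← dist_eq_norm, dist_eq_norm] at h2
    have e2 : ‖(xs - y) + (-ε) • y‖^2 = ‖xs - y‖^2 + 2*(-ε * ⟪xs - y, y⟫) + ε^2*‖y‖^2 := by
      simp only [norm_add_sq_real, real_inner_smul_right, norm_smul, Real.norm_eq_abs,
        mul_pow, sq_abs, neg_sq]
      try ring
    nlinarith [norm_nonneg (xs - y), norm_nonneg ((xs - y) + (-ε) • y), h2, e2]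
  have hA : ⟪xs - y, y⟫ = 0 := by
    by_cases hy0 : ‖y‖ = 0
    · have : y = 0 := norm_eq_zero.mp hy0
      simp [this]
    · have hypos : 0 < ‖y‖^2 := by positivity
      set A := ⟪xs - y, y⟫ with hAdef
      rcases lt_trichotomy A 0 with h | h | h
      · exfalso
        set ε := max (-1/2) (A / ‖y‖^2) with hε
        have hεneg : ε < 0 := by
          apply max_lt (by norm_num)
          exact div_neg_of_neg_of_pos h hypos
        have hεgt : -1 < ε := lt_of_lt_of_le (by norm_num) (le_max_left _ _)
        have h1 : A / ‖y‖^2 ≤ ε := le_max_right _ _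
        have h2 : A ≤ ε * ‖y‖^2 := by
          rw [div_le_iff₀ hypos] at h1
          linarith
        have := key ε hεgt
        nlinarith
      · exact h
      · exfalso
        set ε := min (1/2) (A / ‖y‖^2) with hε
        have hεpos : 0 < ε := lt_min (by norm_num) (div_pos h hypos)
        have h1 : ε ≤ A / ‖y‖^2 := min_le_right _ _
        have h2 : ε * ‖y‖^2 ≤ A := by
          rw [le_div_iff₀ hypos] at h1
          linarith
        have := key ε (by linarith)
        nlinarith
  have : ⟪xs, y⟫ = ⟪xs - y, y⟫ + ⟪y, y⟫ := by
    rw [← inner_add_left]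
    norm_num
  rw [this, hA, real_inner_self_eq_norm_sq]
  ring

set_option maxHeartbeats 1000000 in
lemma forward_dir {n m : ℕ} {S : Eu n → Set (Eu m)} {X : Set (Eu n)} {xb : Eu n} {ub : Eu m}
    (hXconv : Convex ℝ X) {κ : ℝ} (hκ : 0 ≤ κ) {V : Set (Eu n)} (hV : V ∈ 𝓝 xb)
    {W : Set (Eu m)} (hW : W ∈ 𝓝 ub)
    (hLip : ∀ x ∈ X ∩ V, ∀ x' ∈ X ∩ V, ∀ u ∈ S x' ∩ W, ∃ u'' ∈ S x, ‖u - u''‖ ≤ κ * ‖x' - x‖) :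
    ∀ᶠ p : Eu n × Eu m in 𝓝 (xb, ub), p ∈ svGraph S X →
      ∀ xs us, (xs, -us) ∈ limNormalP (svGraph S X) p →
        ∀ y ∈ projSet (tangCone X p.1) xs, ‖y‖ ≤ κ * ‖us‖ := by
  obtain ⟨εV, hεV, hballV⟩ := Metric.mem_nhds_iff.mp hV
  obtain ⟨εW, hεW, hballW⟩ := Metric.mem_nhds_iff.mp hW
  set r := min εV εW / 3 with hr
  have hrpos : 0 < r := by positivity
  have hrV : Metric.ball xb (3*r) ⊆ V := by
    refine subset_trans ?_ hballV
    apply Metric.ball_subset_ball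
    have := min_le_left εV εW
    rw [hr]; linarith
  have hrW : Metric.ball ub (3*r) ⊆ W := by
    refine subset_trans ?_ hballW
    apply Metric.ball_subset_ball
    have := min_le_right εV εW
    rw [hr]; linarith
  -- Step A: estimate for regular normals at nearby graph points
  have hA : ∀ q : Eu n × Eu m, q ∈ svGraph S X → dist q.1 xb < 2*r → dist q.2 ub < 2*r →
      ∀ w ∈ regNormalP (svGraph S X) q, ∀ z ∈ X, ⟪w.1, z - q.1⟫ ≤ κ * ‖w.2‖ * ‖z - q.1‖ := by
    intro q hqG hq1 hq2 w hw z hz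
    by_cases hzq : z = q.1
    · simp [hzq]
    have hN : 0 < ‖z - q.1‖ := norm_pos_iff.mpr (sub_ne_zero.mpr hzq)
    set N := ‖z - q.1‖ with hNdef
    set M := max 1 κ with hM
    have hM1 : (1:ℝ) ≤ M := le_max_left _ _
    have hMκ : κ ≤ M := le_max_right _ _
    have hMpos : 0 < M := lt_of_lt_of_le one_pos hM1
    refine le_of_forall_pos_le_add fun ε hε => ?_
    have hε'pos : 0 < ε / (N * M) := by positivity
    obtain ⟨δ, hδ, hreg⟩ := hw _ hε'pos
    set t := min 1 (min (δ / (N * M)) (r / (2 * N))) with ht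
    have htpos : 0 < t := by
      apply lt_min one_pos
      apply lt_min <;> positivity
    have ht1 : t ≤ 1 := min_le_left _ _
    have htδ : t * (N * M) ≤ δ := by
      have : t ≤ δ / (N * M) := le_trans (min_le_right _ _) (min_le_left _ _)
      rw [le_div_iff₀ (by positivity)] at this
      linarith
    have htr : t * N < r := by
      have h' : t ≤ r / (2 * N) := le_trans (min_le_right _ _) (min_le_right _ _)
      have : t * N ≤ r / 2 := by
        rw [le_div_iff₀ (by positivity)] at h'
        nlinarith
      linarith
    set x₂ := q.1 + t • (z - q.1) with hx₂
    have hx₂X : x₂ ∈ X := by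
      have := hXconv hqG.1 hz (a := 1 - t) (b := t) (by linarith) (le_of_lt htpos) (by ring)
      convert this using 1
      rw [hx₂, smul_sub, sub_smul, one_smul]
      abel
    have hd₂ : dist x₂ q.1 = t * N := by
      rw [hx₂, dist_eq_norm]
      simp only [add_sub_cancel_left, norm_smul, Real.norm_eq_abs, abs_of_pos htpos]
      rfl
    have hx₂V : x₂ ∈ V := by
      apply hrV
      rw [Metric.mem_ball]
      calc dist x₂ xb ≤ dist x₂ q.1 + dist q.1 xb := dist_triangle _ _ _
      _ < t * N + 2*r := by rw [hd₂]; linarith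
      _ < 3 * r := by linarith
    have hq1V : q.1 ∈ V := hrV (by rw [Metric.mem_ball]; linarith)
    have hq2W : q.2 ∈ W := hrW (by rw [Metric.mem_ball]; linarith)
    obtain ⟨u'', hu''S, hu''⟩ := hLip x₂ ⟨hx₂X, hx₂V⟩ q.1 ⟨hqG.1, hq1V⟩ q.2 ⟨hqG.2, hq2W⟩
    have hu''b : ‖q.2 - u''‖ ≤ κ * (t * N) := by
      have : ‖q.1 - x₂‖ = t * N := by
        rw [← dist_eq_norm, dist_comm]; exact hd₂
      rw [this] at hu''
      linarith
    have hbG : (x₂, u'') ∈ svGraph S X := ⟨hx₂X, hu''S⟩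
    have hbdist : ‖(x₂, u'') - q‖ ≤ t * (N * M) := by
      rw [Prod.norm_def]
      apply max_le
      · show ‖x₂ - q.1‖ ≤ _
        have : ‖x₂ - q.1‖ = t * N := by rw [← dist_eq_norm]; exact hd₂
        rw [this]
        nlinarith [mul_nonneg (mul_nonneg htpos.le hN.le) (sub_nonneg.mpr hM1)]
      · show ‖u'' - q.2‖ ≤ _
        rw [norm_sub_rev]
        calc ‖q.2 - u''‖ ≤ κ * (t * N) := hu''b
        _ ≤ t * (N * M) := by
            nlinarith [mul_nonneg (mul_nonneg htpos.le hN.le) (sub_nonneg.mpr hMκ)]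
    have hkey : ⟪w.1, x₂ - q.1⟫ + ⟪w.2, u'' - q.2⟫ ≤ ε / (N * M) * ‖(x₂, u'') - q‖ :=
      hreg (x₂, u'') hbG (le_trans hbdist htδ)
    have hin1 : ⟪w.1, x₂ - q.1⟫ = t * ⟪w.1, z - q.1⟫ := by
      rw [hx₂]
      simp only [add_sub_cancel_left, real_inner_smul_right]
    have hin2 : -(‖w.2‖ * (κ * (t * N))) ≤ ⟪w.2, u'' - q.2⟫ := by
      have h1 : |⟪w.2, u'' - q.2⟫| ≤ ‖w.2‖ * ‖u'' - q.2‖ := abs_real_inner_le_norm _ _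
      have h2 : ‖u'' - q.2‖ ≤ κ * (t * N) := by rw [norm_sub_rev]; exact hu''b
      have := neg_abs_le ⟪w.2, u'' - q.2⟫
      nlinarith [norm_nonneg w.2]
    have hrhs : ε / (N * M) * ‖(x₂, u'') - q‖ ≤ t * ε := by
      calc ε / (N * M) * ‖(x₂, u'') - q‖ ≤ ε / (N * M) * (t * (N * M)) := by
            apply mul_le_mul_of_nonneg_left hbdist (le_of_lt hε'pos)
      _ = t * ε := by field_simp
    have hfin : t * ⟪w.1, z - q.1⟫ ≤ t * (κ * ‖w.2‖ * N + ε) := by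
      rw [← hin1]
      linarith [hkey, hin2, hrhs]
    exact le_of_mul_le_mul_left hfin htpos
  -- now the eventual statement
  rw [Metric.eventually_nhds_iff]
  refine ⟨r, hrpos, fun p hp hpG xs us hlim y hy => ?_⟩
  obtain ⟨bk, wk, hbkG, hwkreg, hbkt, hwkt⟩ := hlim
  -- Step B
  have hB : ∀ z ∈ X, ⟪xs, z - p.1⟫ ≤ κ * ‖us‖ * ‖z - p.1‖ := by
    intro z hz
    have hev : ∀ᶠ k in atTop, ⟪(wk k).1, z - (bk k).1⟫ ≤ κ * ‖(wk k).2‖ * ‖z - (bk k).1‖ := by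
      have hball : ∀ᶠ k in atTop, dist (bk k) p < r :=
        hbkt.eventually (Metric.eventually_nhds_iff.mpr ⟨r, hrpos, fun y hy => hy⟩)
      filter_upwards [hball] with k hk
      have hd1 : dist (bk k).1 xb < 2*r := by
        calc dist (bk k).1 xb ≤ dist (bk k) (xb, ub) := by
              rw [Prod.dist_eq]; exact le_max_left _ _
        _ ≤ dist (bk k) p + dist p (xb, ub) := dist_triangle _ _ _
        _ < r + r := by linarith
        _ = 2*r := by ring
      have hd2 : dist (bk k).2 ub < 2*r := by
        calc dist (bk k).2 ub ≤ dist (bk k) (xb, ub) := by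
              rw [Prod.dist_eq]; exact le_max_right _ _
        _ ≤ dist (bk k) p + dist p (xb, ub) := dist_triangle _ _ _
        _ < r + r := by linarith
        _ = 2*r := by ring
      exact hA (bk k) (hbkG k) hd1 hd2 (wk k) (hwkreg k) z hz
    have hl1 : Tendsto (fun k => ⟪(wk k).1, z - (bk k).1⟫) atTop (𝓝 ⟪xs, z - p.1⟫) := by
      have hfst : Tendsto (fun k => (wk k).1) atTop (𝓝 xs) :=
        (continuous_fst.tendsto _).comp hwkt
      have hbfst : Tendsto (fun k => (bk k).1) atTop (𝓝 p.1) :=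
        (continuous_fst.tendsto _).comp hbkt
      exact hfst.inner (tendsto_const_nhds.sub hbfst)
    have hl2 : Tendsto (fun k => κ * ‖(wk k).2‖ * ‖z - (bk k).1‖) atTop
        (𝓝 (κ * ‖us‖ * ‖z - p.1‖)) := by
      have hsnd : Tendsto (fun k => (wk k).2) atTop (𝓝 (-us)) :=
        (continuous_snd.tendsto _).comp hwkt
      have hbfst : Tendsto (fun k => (bk k).1) atTop (𝓝 p.1) :=
        (continuous_fst.tendsto _).comp hbkt
      have : Tendsto (fun k => κ * ‖(wk k).2‖ * ‖z - (bk k).1‖) atTop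
          (𝓝 (κ * ‖-us‖ * ‖z - p.1‖)) :=
        ((tendsto_const_nhds.mul hsnd.norm).mul (tendsto_const_nhds.sub hbfst).norm)
      rwa [norm_neg] at this
    exact le_of_tendsto_of_tendsto hl1 hl2 hev
  -- Step C
  have hC : ∀ w ∈ tangCone X p.1, ⟪xs, w⟫ ≤ κ * ‖us‖ * ‖w‖ := by
    rintro w ⟨t, v, ht, ht0, hv, hm⟩
    have hk : ∀ k, ⟪xs, v k⟫ ≤ κ * ‖us‖ * ‖v k‖ := by
      intro k
      have := hB _ (hm k)
      rw [add_sub_cancel_left, real_inner_smul_right, norm_smul, Real.norm_eq_abs,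
        abs_of_pos (ht k)] at this
      have h2 : t k * ⟪xs, v k⟫ ≤ t k * (κ * ‖us‖ * ‖v k‖) := by
        calc t k * ⟪xs, v k⟫ ≤ κ * ‖us‖ * (t k * ‖v k‖) := this
        _ = t k * (κ * ‖us‖ * ‖v k‖) := by ring
      exact le_of_mul_le_mul_left h2 (ht k)
    have hl1 : Tendsto (fun k => ⟪xs, v k⟫) atTop (𝓝 ⟪xs, w⟫) :=
      tendsto_const_nhds.inner hv
    have hl2 : Tendsto (fun k => κ * ‖us‖ * ‖v k‖) atTop (𝓝 (κ * ‖us‖ * ‖w‖)) :=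
      tendsto_const_nhds.mul hv.norm
    exact le_of_tendsto_of_tendsto hl1 hl2 (Filter.Eventually.of_forall hk)
  -- Step D
  have hyT := hy.1
  have hsq : ⟪xs, y⟫ = ‖y‖^2 :=
    inner_eq_sq_of_projSet hy (fun c hc => smul_mem_tangCone hc hyT)
  have hbound : ‖y‖^2 ≤ κ * ‖us‖ * ‖y‖ := by rw [← hsq]; exact hC y hyT
  rcases eq_or_lt_of_le (norm_nonneg y) with h0 | h0
  · rw [← h0]
    exact mul_nonneg hκ (norm_nonneg _)
  · have : ‖y‖ * ‖y‖ ≤ (κ * ‖us‖) * ‖y‖ := by nlinarith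
    exact le_of_mul_le_mul_right this h0

set_option maxHeartbeats 1000000 in
lemma step_lemma {n m : ℕ} {S : Eu n → Set (Eu m)} {X : Set (Eu n)} (hXconv : Convex ℝ X)
    {xb : Eu n} {ub : Eu m} {r₀ r₁ κ : ℝ} (hκ : 0 ≤ κ)
    (hK : IsClosed (svGraph S X ∩ Metric.closedBall (xb, ub) r₁))
    (H : ∀ p : Eu n × Eu m, dist p (xb, ub) < r₀ → p ∈ svGraph S X →
      ∀ xs us, (xs, -us) ∈ limNormalP (svGraph S X) p →
        ∀ y ∈ projSet (tangCone X p.1) xs, ‖y‖ ≤ κ * ‖us‖)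
    {x : Eu n} (hx : x ∈ X) {p : Eu n × Eu m}
    (hp : p ∈ svGraph S X ∩ Metric.closedBall (xb, ub) r₁)
    (h1 : ‖p.1 - x‖ + dist x xb < min r₀ r₁)
    (h2 : (2*κ+2) * ‖p.1 - x‖ + dist p.2 ub < min r₀ r₁) :
    ∃ q, q ∈ svGraph S X ∩ Metric.closedBall (xb, ub) r₁ ∧
      ‖q.1 - x‖ ≤ (1/2) * ‖p.1 - x‖ ∧ ‖q.2 - p.2‖ ≤ (2*κ+2) * ‖p.1 - x‖ := by
  have hlam : (0:ℝ) < (2*κ+2)⁻¹ := by positivity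
  set lam := (2*κ+2)⁻¹ with hlamdef
  have hlaminv : lam * (2*κ+2) = 1 := by
    rw [hlamdef, inv_mul_cancel₀]; positivity
  set K := svGraph S X ∩ Metric.closedBall (xb, ub) r₁ with hKdef
  have hcomp : IsCompact K :=
    (isCompact_closedBall _ _).of_isClosed_subset hK Set.inter_subset_right
  have hne : K.Nonempty := ⟨p, hp⟩
  set φ : Eu n × Eu m → ℝ := fun b => ‖b.1 - x‖^2 + lam^2 * ‖b.2 - p.2‖^2 with hφ
  have hcont : ContinuousOn φ K := by
    apply Continuous.continuousOn
    fun_prop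
  obtain ⟨a, haK, hmin⟩ := hcomp.exists_isMinOn hne hcont
  have hminp := hmin hp
  have hφp : φ p = ‖p.1 - x‖^2 := by
    rw [hφ]; simp
  have hφa : ‖a.1 - x‖^2 + lam^2 * ‖a.2 - p.2‖^2 ≤ ‖p.1 - x‖^2 := by
    have : φ a ≤ φ p := hminp
    rwa [hφp] at this
  have ha1 : ‖a.1 - x‖ ≤ ‖p.1 - x‖ := by
    nlinarith [norm_nonneg (a.1 - x), norm_nonneg (p.1 - x), sq_nonneg (lam * ‖a.2 - p.2‖),
      mul_pow lam (‖a.2 - p.2‖) 2]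
  have ha2 : lam * ‖a.2 - p.2‖ ≤ ‖p.1 - x‖ := by
    nlinarith [mul_nonneg hlam.le (norm_nonneg (a.2 - p.2)), norm_nonneg (p.1 - x),
      norm_nonneg (a.1 - x), mul_pow lam (‖a.2 - p.2‖) 2]
  have ha2' : ‖a.2 - p.2‖ ≤ (2*κ+2) * ‖p.1 - x‖ := by
    have := mul_le_mul_of_nonneg_left ha2 (by positivity : (0:ℝ) ≤ 2*κ+2)
    calc ‖a.2 - p.2‖ = (2*κ+2) * (lam * ‖a.2 - p.2‖) := by
          rw [← mul_assoc, mul_comm (2*κ+2) lam, hlaminv, one_mul]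
    _ ≤ (2*κ+2) * ‖p.1 - x‖ := this
  -- location of a
  have hloca : dist a (xb, ub) < min r₀ r₁ := by
    rw [Prod.dist_eq]
    apply max_lt
    · calc dist a.1 xb ≤ dist a.1 x + dist x xb := dist_triangle _ _ _
      _ = ‖a.1 - x‖ + dist x xb := by rw [dist_eq_norm]
      _ ≤ ‖p.1 - x‖ + dist x xb := by linarith
      _ < min r₀ r₁ := h1
    · calc dist a.2 ub ≤ dist a.2 p.2 + dist p.2 ub := dist_triangle _ _ _
      _ = ‖a.2 - p.2‖ + dist p.2 ub := by rw [dist_eq_norm]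
      _ ≤ (2*κ+2) * ‖p.1 - x‖ + dist p.2 ub := by linarith
      _ < min r₀ r₁ := h2
  have hlocar₁ : dist a (xb, ub) < r₁ := lt_of_lt_of_le hloca (min_le_right _ _)
  -- the proximal normal is a regular normal
  have hreg : ((x - a.1, lam^2 • (p.2 - a.2)) : Eu n × Eu m) ∈ regNormalP (svGraph S X) a := by
    intro ε hε
    have hmarg : 0 < r₁ - dist a (xb, ub) := by linarith
    refine ⟨min (2*ε/(1+lam^2)) (r₁ - dist a (xb, ub)), by positivity, ?_⟩
    intro b hbG hbd
    have hbK : b ∈ K := by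
      refine ⟨hbG, ?_⟩
      rw [Metric.mem_closedBall]
      have hba : dist b a ≤ r₁ - dist a (xb, ub) := by
        rw [dist_eq_norm]
        exact le_trans hbd (min_le_right _ _)
      calc dist b (xb, ub) ≤ dist b a + dist a (xb, ub) := dist_triangle _ _ _
      _ ≤ (r₁ - dist a (xb, ub)) + dist a (xb, ub) := by linarith
      _ = r₁ := by ring
    have hfb : φ a ≤ φ b := hmin hbK
    have e1 : ‖b.1 - x‖^2 = ‖b.1 - a.1‖^2 + 2*⟪b.1 - a.1, a.1 - x⟫ + ‖a.1 - x‖^2 := by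
      rw [show b.1 - x = (b.1 - a.1) + (a.1 - x) by abel, norm_add_sq_real]
    have e2 : ‖b.2 - p.2‖^2 = ‖b.2 - a.2‖^2 + 2*⟪b.2 - a.2, a.2 - p.2⟫ + ‖a.2 - p.2‖^2 := by
      rw [show b.2 - p.2 = (b.2 - a.2) + (a.2 - p.2) by abel, norm_add_sq_real]
    show ⟪x - a.1, b.1 - a.1⟫ + ⟪lam^2 • (p.2 - a.2), b.2 - a.2⟫ ≤ _ * ‖b - a‖
    have g1 : ⟪x - a.1, b.1 - a.1⟫ = -⟪b.1 - a.1, a.1 - x⟫ := by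
      rw [real_inner_comm, show x - a.1 = -(a.1 - x) by abel, inner_neg_right]
    have g2 : ⟪lam^2 • (p.2 - a.2), b.2 - a.2⟫ = -(lam^2 * ⟪b.2 - a.2, a.2 - p.2⟫) := by
      rw [real_inner_smul_left, real_inner_comm, show p.2 - a.2 = -(a.2 - p.2) by abel,
        inner_neg_right]
      ring
    have hb1 : ‖b.1 - a.1‖ ≤ ‖b - a‖ := norm_fst_le (b - a)
    have hb2 : ‖b.2 - a.2‖ ≤ ‖b - a‖ := norm_snd_le (b - a)
    have hbnn : (0:ℝ) ≤ ‖b - a‖ := norm_nonneg _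
    have hexp : 0 ≤ ‖b.1 - a.1‖^2 + 2*⟪b.1 - a.1, a.1 - x⟫
        + lam^2 * (‖b.2 - a.2‖^2 + 2*⟪b.2 - a.2, a.2 - p.2⟫) := by
      have : φ a ≤ φ b := hfb
      rw [hφ] at this
      simp only at this
      rw [e1, e2] at this
      nlinarith [this]
    have hN1 : ‖b.1 - a.1‖^2 ≤ ‖b - a‖^2 := by nlinarith [norm_nonneg (b.1 - a.1)]
    have hN2 : ‖b.2 - a.2‖^2 ≤ ‖b - a‖^2 := by nlinarith [norm_nonneg (b.2 - a.2)]
    have hD : (1 + lam^2) * ‖b - a‖ ≤ 2*ε := by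
      have hd : ‖b - a‖ ≤ 2*ε/(1+lam^2) := le_trans hbd (min_le_left _ _)
      rw [le_div_iff₀ (by positivity)] at hd
      linarith
    rw [g1, g2]
    nlinarith [hexp, hN1, hN2, hD, hbnn, sq_nonneg lam, mul_nonneg (mul_nonneg hlam.le hlam.le) (sq_nonneg ‖b - a‖)]
  -- regular normal is a limiting normal
  have hlim : ((x - a.1, lam^2 • (p.2 - a.2)) : Eu n × Eu m) ∈ limNormalP (svGraph S X) a :=
    ⟨fun _ => a, fun _ => (x - a.1, lam^2 • (p.2 - a.2)), fun _ => haK.1, fun _ => hreg,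
      tendsto_const_nhds, tendsto_const_nhds⟩
  have hpair : ((x - a.1, -(lam^2 • (a.2 - p.2))) : Eu n × Eu m)
      = (x - a.1, lam^2 • (p.2 - a.2)) := by
    rw [← smul_neg, neg_sub]
  have htang : x - a.1 ∈ tangCone X a.1 := sub_mem_tangCone hXconv haK.1.1 hx
  have hproj : x - a.1 ∈ projSet (tangCone X a.1) (x - a.1) := by
    refine ⟨htang, fun z hz => ?_⟩
    simp only [sub_self, norm_zero]
    exact norm_nonneg _
  have happ := H a (lt_of_lt_of_le hloca (min_le_left _ _)) haK.1 (x - a.1)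
    (lam^2 • (a.2 - p.2)) (by rw [hpair]; exact hlim) (x - a.1) hproj
  have hnorm : ‖lam^2 • (a.2 - p.2)‖ = lam^2 * ‖a.2 - p.2‖ := by
    rw [norm_smul, Real.norm_eq_abs, abs_of_pos (by positivity)]
  rw [hnorm] at happ
  have hfinal : ‖a.1 - x‖ ≤ (1/2) * ‖p.1 - x‖ := by
    have h3 : ‖x - a.1‖ ≤ κ * (lam^2 * ‖a.2 - p.2‖) := happ
    have h4 : lam^2 * ‖a.2 - p.2‖ = lam * (lam * ‖a.2 - p.2‖) := by ring
    have h5 : κ * (lam^2 * ‖a.2 - p.2‖) ≤ κ * (lam * ‖p.1 - x‖) := by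
      rw [h4]
      apply mul_le_mul_of_nonneg_left _ hκ
      exact mul_le_mul_of_nonneg_left ha2 hlam.le
    have h6 : κ * lam ≤ 1/2 := by
      rw [hlamdef, mul_inv_le_iff₀ (by positivity : (0:ℝ) < 2*κ+2)]
      linarith
    have h7 : κ * (lam * ‖p.1 - x‖) ≤ (1/2) * ‖p.1 - x‖ := by
      rw [← mul_assoc]
      exact mul_le_mul_of_nonneg_right h6 (norm_nonneg _)
    rw [norm_sub_rev]
    linarith
  exact ⟨a, haK, hfinal, ha2'⟩

/-- invariant for the iterative projection scheme. -/
def InvP {n m : ℕ} (S : Eu n → Set (Eu m)) (X : Set (Eu n)) (xb : Eu n) (ub : Eu m)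
    (r₁ κ t : ℝ) (x : Eu n) (u : Eu m) (j : ℕ) (q : Eu n × Eu m) : Prop :=
  q ∈ svGraph S X ∩ Metric.closedBall (xb, ub) r₁ ∧
    ‖q.1 - x‖ ≤ t * (1/2)^j ∧ ‖q.2 - u‖ ≤ (4*κ+4) * t * (1 - (1/2)^j)

set_option maxHeartbeats 1000000 in
lemma backward_dir {n m : ℕ} {S : Eu n → Set (Eu m)} {X : Set (Eu n)} {xb : Eu n} {ub : Eu m}
    (hX : IsClosed X) (hXconv : Convex ℝ X)
    (hloc : LocallyClosedAt (svGraph S univ) (xb, ub)) {κ : ℝ} (hκ : 0 ≤ κ)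
    (hEv : ∀ᶠ p : Eu n × Eu m in 𝓝 (xb, ub), p ∈ svGraph S X →
      ∀ xs us, (xs, -us) ∈ limNormalP (svGraph S X) p →
        ∀ y ∈ projSet (tangCone X p.1) xs, ‖y‖ ≤ κ * ‖us‖) :
    LipschitzLikeRel S X xb ub (4*κ+4) := by
  obtain ⟨r₀, hr₀, H⟩ := Metric.eventually_nhds_iff.mp hEv
  obtain ⟨U, hU, hUcl⟩ := hloc
  obtain ⟨r₁', hr₁', hballU⟩ := Metric.mem_nhds_iff.mp hU
  set r₁ := r₁' / 2 with hr₁def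
  have hr₁ : 0 < r₁ := by positivity
  have hsubU : Metric.closedBall ((xb, ub) : Eu n × Eu m) r₁ ⊆ U := by
    refine subset_trans ?_ hballU
    apply Metric.closedBall_subset_ball
    rw [hr₁def]; linarith
  have hK : IsClosed (svGraph S X ∩ Metric.closedBall (xb, ub) r₁) := by
    have heq : svGraph S X ∩ Metric.closedBall (xb, ub) r₁ =
        (svGraph S univ ∩ U) ∩ ((X ×ˢ (univ : Set (Eu m))) ∩ Metric.closedBall (xb, ub) r₁) := by
      ext q
      simp only [Set.mem_inter_iff, svGraph, Set.mem_setOf_eq, Set.mem_prod, Set.mem_univ,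
        true_and, and_true]
      constructor
      · rintro ⟨⟨hqX, hqS⟩, hqB⟩
        exact ⟨⟨hqS, hsubU hqB⟩, hqX, hqB⟩
      · rintro ⟨⟨hqS, _⟩, hqX, hqB⟩
        exact ⟨⟨hqX, hqS⟩, hqB⟩
    rw [heq]
    exact hUcl.inter ((hX.prod isClosed_univ).inter Metric.isClosed_closedBall)
  set r := min r₀ r₁ with hrdef
  have hr : 0 < r := lt_min hr₀ hr₁
  set ρ := r / (12*κ+14) with hρdef
  have hρ : 0 < ρ := by positivity
  have hρr : ρ ≤ r := by
    rw [hρdef]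
    apply div_le_self hr.le
    linarith
  have hden : (0:ℝ) < 12*κ+14 := by positivity
  have h3ρ : 3 * ρ < r := by
    have h' : 3*r/(12*κ+14) < r := (div_lt_iff₀ hden).mpr (by nlinarith)
    calc 3*ρ = 3*r/(12*κ+14) := by rw [hρdef]; ring
    _ < r := h'
  refine ⟨⟨U, hU, hUcl⟩, Metric.ball xb ρ, Metric.ball_mem_nhds _ hρ,
    Metric.ball ub ρ, Metric.ball_mem_nhds _ hρ, ?_⟩
  rintro x ⟨hxX, hxV⟩ x' ⟨hx'X, hx'V⟩ u ⟨huS, huW⟩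
  rw [Metric.mem_ball] at hxV hx'V huW
  set t := ‖x' - x‖ with htdef
  have ht0 : 0 ≤ t := norm_nonneg _
  have htρ : t < 2*ρ := by
    rw [htdef, ← dist_eq_norm]
    calc dist x' x ≤ dist x' xb + dist x xb := dist_triangle_right _ _ _
    _ < ρ + ρ := by linarith
    _ = 2*ρ := by ring
  -- the inductive step
  have key : ∀ (j : ℕ) (q : Eu n × Eu m), InvP S X xb ub r₁ κ t x u j q →
      ∃ q', InvP S X xb ub r₁ κ t x u (j+1) q' ∧ ‖q'.2 - q.2‖ ≤ (2*κ+2) * (t * (1/2)^j) := by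
    rintro j q ⟨hqK, hq1, hq2⟩
    have hpow1 : ((1:ℝ)/2)^j ≤ 1 := pow_le_one₀ (by norm_num) (by norm_num)
    have hpow0 : (0:ℝ) ≤ (1/2)^j := by positivity
    have hq1' : ‖q.1 - x‖ ≤ t := le_trans hq1 (by nlinarith [mul_nonneg ht0 (by linarith : (0:ℝ) ≤ 1 - (1/2)^j)])
    have hq2' : ‖q.2 - u‖ ≤ (4*κ+4) * t := by
      refine le_trans hq2 ?_
      nlinarith [mul_nonneg (mul_nonneg (by linarith : (0:ℝ) ≤ 4*κ+4) ht0) hpow0]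
    have h1 : ‖q.1 - x‖ + dist x xb < min r₀ r₁ := by
      calc ‖q.1 - x‖ + dist x xb < t + ρ := by linarith
      _ < 2*ρ + ρ := by linarith
      _ = 3*ρ := by ring
      _ < r := h3ρ
      _ ≤ min r₀ r₁ := le_of_eq hrdef.symm
    have h2 : (2*κ+2) * ‖q.1 - x‖ + dist q.2 ub < min r₀ r₁ := by
      have hd : dist q.2 ub ≤ ‖q.2 - u‖ + dist u ub := by
        rw [← dist_eq_norm]
        exact dist_triangle _ _ _
      calc (2*κ+2) * ‖q.1 - x‖ + dist q.2 ub
          ≤ (2*κ+2) * t + (‖q.2 - u‖ + dist u ub) := by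
            have := mul_le_mul_of_nonneg_left hq1' (by positivity : (0:ℝ) ≤ 2*κ+2)
            linarith
      _ < (2*κ+2) * (2*ρ) + ((4*κ+4) * (2*ρ) + ρ) := by
            have h5 := mul_le_mul_of_nonneg_left htρ.le (by positivity : (0:ℝ) ≤ 2*κ+2)
            have h6 : (4*κ+4) * t ≤ (4*κ+4) * (2*ρ) :=
              mul_le_mul_of_nonneg_left htρ.le (by positivity)
            linarith
      _ = (12*κ+13) * ρ := by ring
      _ < (12*κ+14) * ρ := by nlinarith [hρ]
      _ = r := by
          rw [hρdef, mul_comm, div_mul_cancel₀ _ (ne_of_gt hden)]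
      _ ≤ min r₀ r₁ := le_of_eq hrdef.symm
    obtain ⟨q', hq'K, hs1, hs2⟩ := step_lemma hXconv hκ hK (fun p hp => H hp) hxX hqK h1 h2
    have hd2 : ‖q'.2 - q.2‖ ≤ (2*κ+2) * (t * (1/2)^j) := by
      refine le_trans hs2 ?_
      apply mul_le_mul_of_nonneg_left hq1 (by positivity)
    refine ⟨q', ⟨hq'K, ?_, ?_⟩, hd2⟩
    · calc ‖q'.1 - x‖ ≤ (1/2) * ‖q.1 - x‖ := hs1
      _ ≤ (1/2) * (t * (1/2)^j) := by
          apply mul_le_mul_of_nonneg_left hq1 (by norm_num)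
      _ = t * (1/2)^(j+1) := by ring
    · calc ‖q'.2 - u‖ = dist q'.2 u := (dist_eq_norm _ _).symm
      _ ≤ dist q'.2 q.2 + dist q.2 u := dist_triangle _ _ _
      _ = ‖q'.2 - q.2‖ + ‖q.2 - u‖ := by rw [dist_eq_norm, dist_eq_norm]
      _ ≤ (2*κ+2) * (t * (1/2)^j) + (4*κ+4) * t * (1 - (1/2)^j) := by linarith
      _ = (4*κ+4) * t * (1 - (1/2)^(j+1)) := by ring
  choose F hF1 hF2 using key
  have hInv0 : InvP S X xb ub r₁ κ t x u 0 (x', u) := by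
    refine ⟨⟨⟨hx'X, huS⟩, ?_⟩, ?_, ?_⟩
    · rw [Metric.mem_closedBall, Prod.dist_eq]
      apply max_le <;> simp only
      · calc dist x' xb ≤ ρ := hx'V.le
        _ ≤ r := hρr
        _ ≤ r₁ := min_le_right _ _
      · calc dist u ub ≤ ρ := huW.le
        _ ≤ r := hρr
        _ ≤ r₁ := min_le_right _ _
    · simp [htdef]
    · simp
  let seq : ∀ j : ℕ, {q : Eu n × Eu m // InvP S X xb ub r₁ κ t x u j q} := fun j =>
    Nat.rec ⟨(x', u), hInv0⟩ (fun j ih => ⟨F j ih.1 ih.2, hF1 j ih.1 ih.2⟩) j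
  have hdiff : ∀ j, ‖(seq (j+1)).1.2 - (seq j).1.2‖ ≤ (2*κ+2) * t * (1/2)^j := by
    intro j
    have := hF2 j (seq j).1 (seq j).2
    calc ‖(seq (j+1)).1.2 - (seq j).1.2‖ ≤ (2*κ+2) * (t * (1/2)^j) := this
    _ = (2*κ+2) * t * (1/2)^j := by ring
  have hcauchy : CauchySeq (fun j => (seq j).1.2) := by
    apply cauchySeq_of_le_geometric (1/2) ((2*κ+2)*t) (by norm_num)
    intro j
    rw [dist_eq_norm, norm_sub_rev]
    exact hdiff j
  obtain ⟨wlim, hwlim⟩ := cauchySeq_tendsto_of_complete hcauchy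
  have hz : Tendsto (fun j => (seq j).1.1) atTop (𝓝 x) := by
    rw [tendsto_iff_dist_tendsto_zero]
    have hg : Tendsto (fun j : ℕ => t * (1/2)^j) atTop (𝓝 0) := by
      have h' := (tendsto_pow_atTop_nhds_zero_of_lt_one (by norm_num : (0:ℝ) ≤ 1/2)
        (by norm_num : (1:ℝ)/2 < 1)).const_mul t
      rw [mul_zero] at h'
      exact h'
    exact squeeze_zero (fun j => dist_nonneg)
      (fun j => by rw [dist_eq_norm]; exact (seq j).2.2.1) hg
  have hprod : Tendsto (fun j => (seq j).1) atTop (𝓝 (x, wlim)) := hz.prodMk_nhds hwlim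
  have hmem : (x, wlim) ∈ svGraph S X ∩ Metric.closedBall (xb, ub) r₁ :=
    hK.mem_of_tendsto hprod (Filter.Eventually.of_forall fun j => (seq j).2.1)
  have hbnd : ‖wlim - u‖ ≤ (4*κ+4) * t := by
    apply le_of_tendsto ((hwlim.sub tendsto_const_nhds).norm)
    apply Filter.Eventually.of_forall
    intro j
    have h1 := (seq j).2.2.2
    have hpow0 : (0:ℝ) ≤ (1/2)^j := by positivity
    nlinarith [mul_nonneg (mul_nonneg (by linarith : (0:ℝ) ≤ 4*κ+4) ht0) hpow0]
  refine ⟨wlim, hmem.1.2, ?_⟩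
  rw [norm_sub_rev]
  exact hbnd


/-- Theorem 2.3: for `X` closed and convex, `S` has the Lipschitz-like
property relative to `X` at `x̄` for `ū` iff there is `κ ≥ 0` such that for all
`(x, u) ∈ graph S|_X` close enough to `(x̄, ū)`, every `(x*, -u*)` in the limiting normal
cone to `graph S|_X` at `(x, u)` satisfies `‖proj_{T_X(x)}(x*)‖ ≤ κ‖u*‖`. -/
theorem lipschitzLikeRel_iff_proj_coderiv_bound {n m : ℕ} (S : Eu n → Set (Eu m))
    (X : Set (Eu n)) (xb : Eu n) (ub : Eu m) (hX : IsClosed X) (hXconv : Convex ℝ X)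
    (hxb : xb ∈ X) (hub : ub ∈ S xb) (hloc : LocallyClosedAt (svGraph S univ) (xb, ub)) :
    (∃ κ : ℝ, 0 ≤ κ ∧ LipschitzLikeRel S X xb ub κ) ↔
    (∃ κ : ℝ, 0 ≤ κ ∧ ∀ᶠ p : Eu n × Eu m in 𝓝 (xb, ub), p ∈ svGraph S X →
      ∀ xs us, (xs, -us) ∈ limNormalP (svGraph S X) p →
        ∀ y ∈ projSet (tangCone X p.1) xs, ‖y‖ ≤ κ * ‖us‖) := by
  constructor
  · rintro ⟨κ, hκ, h⟩
    obtain ⟨V, hV, W, hW, hLip⟩ := h.2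
    exact ⟨κ, hκ, forward_dir hXconv hκ hV hW hLip⟩
  · rintro ⟨κ, hκ, hEv⟩
    exact ⟨4*κ+4, by linarith, backward_dir hX hXconv hloc hκ hEv⟩
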